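/- For a linear functional 𝒰 on polynomials, a polynomial p, and m ≥ 0, the Leibniz-type formula D_ω^m(p(x)·𝒰) = Σ_{j=0}^{m} C(m,j) · (D_ω^j p)(x + (m-j)ω) · D_ω^{m-j}𝒰 holds, where the action of D_ω on a functional is defined by ⟨D_ω𝒰, p⟩ = -⟨𝒰, D_{-ω} p⟩ and (π·𝒰) is defined by ⟨π𝒰, p⟩ = ⟨𝒰, πp⟩. -/

import Mathlib

open Polynomial Finset

noncomputable def Dw (ω : ℂ) : Polynomial ℂ →ₗ[ℂ] Polynomial ℂ where
  toFun p := C ω⁻¹ * (p.comp (X + C ω) - p)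
  map_add' p r := by
    ext n
    simp [add_comp, coeff_C_mul, coeff_sub, coeff_add]
    ring
  map_smul' c p := by
    ext n
    simp [smul_comp, coeff_C_mul, coeff_smul, coeff_sub, smul_eq_mul]
    ring

/-- The product π·𝒰 of a polynomial and a linear functional: ⟨π𝒰, p⟩ = ⟨𝒰, πp⟩. -/
noncomputable def mulF (π : Polynomial ℂ) (U : Polynomial ℂ →ₗ[ℂ] ℂ) :
    Polynomial ℂ →ₗ[ℂ] ℂ :=
  U ∘ₗ (LinearMap.mulLeft ℂ π)

/-- The difference derivative of a functional: ⟨D_ω𝒰, p⟩ = -⟨𝒰, D_{-ω} p⟩. -/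
noncomputable def DwF (ω : ℂ) (U : Polynomial ℂ →ₗ[ℂ] ℂ) : Polynomial ℂ →ₗ[ℂ] ℂ :=
  -(U ∘ₗ Dw (-ω))

lemma Dw_apply (ω : ℂ) (q : Polynomial ℂ) :
    Dw ω q = C ω⁻¹ * (q.comp (X + C ω) - q) := rfl

lemma shift_shift (q : Polynomial ℂ) (a b : ℂ) :
    (q.comp (X + C a)).comp (X + C b) = q.comp (X + C (a + b)) := by
  rw [comp_assoc]
  congr 1
  simp [add_comp]
  ring

lemma Dw_shift (ω a : ℂ) (q : Polynomial ℂ) :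
    Dw ω (q.comp (X + C a)) = (Dw ω q).comp (X + C a) := by
  simp only [Dw_apply, mul_comp, sub_comp, C_comp, shift_shift, add_comm]

lemma key (ω : ℂ) (hω : ω ≠ 0) (q : Polynomial ℂ) (V : Polynomial ℂ →ₗ[ℂ] ℂ) :
    DwF ω (mulF q V) = mulF (Dw ω q) V + mulF (q.comp (X + C ω)) (DwF ω V) := by
  refine LinearMap.ext fun r => ?_
  have hpoly : q * (Dw (-ω) r) =
      Dw (-ω) ((q.comp (X + C ω)) * r) - (Dw ω q) * r := by
    simp only [Dw_apply, mul_comp, shift_shift]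
    have h0 : ω + -ω = 0 := by ring
    rw [h0]
    have h1 : (-ω)⁻¹ = -ω⁻¹ := by field_simp
    simp only [map_zero, add_zero, comp_X, h1, map_neg]
    ring
  simp only [DwF, mulF, LinearMap.neg_apply, LinearMap.comp_apply,
    LinearMap.mulLeft_apply, LinearMap.add_apply, hpoly, map_sub]
  ring

noncomputable def DwFL (ω : ℂ) :
    (Polynomial ℂ →ₗ[ℂ] ℂ) →ₗ[ℂ] (Polynomial ℂ →ₗ[ℂ] ℂ) where
  toFun := DwF ω
  map_add' V W := by
    simp only [DwF, LinearMap.add_comp, neg_add]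
  map_smul' c V := by
    simp only [DwF, LinearMap.smul_comp, RingHom.id_apply, smul_neg]

lemma DwF_eq (ω : ℂ) (V : Polynomial ℂ →ₗ[ℂ] ℂ) : DwF ω V = DwFL ω V := rfl

/-- Leibniz formula
D_ω^m(p𝒰) = Σ_{j=0}^m C(m,j) (D_ω^j p)(x+(m-j)ω) D_ω^{m-j}𝒰. -/
theorem stmt4 (ω : ℂ) (hω : ω ≠ 0) (U : Polynomial ℂ →ₗ[ℂ] ℂ) (p : Polynomial ℂ) (m : ℕ) :
    (DwF ω)^[m] (mulF p U) =
      ∑ j ∈ Finset.range (m + 1), (m.choose j : ℂ) •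
        mulF (((Dw ω ^ j) p).comp (X + C (((m - j : ℕ) : ℂ) * ω))) ((DwF ω)^[m - j] U) := by  induction m with
  | zero => simp
  | succ m ih =>
    set T : ℕ → (Polynomial ℂ →ₗ[ℂ] ℂ) := fun i =>
      mulF (((Dw ω ^ i) p).comp (X + C (((m + 1 - i : ℕ) : ℂ) * ω))) ((DwF ω)^[m + 1 - i] U)
      with hT
    have hstep : ∀ j ∈ range (m+1),
        DwFL ω ((m.choose j : ℂ) • mulF (((Dw ω ^ j) p).comp (X + C (((m - j : ℕ) : ℂ) * ω)))
          ((DwF ω)^[m - j] U))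
        = (m.choose j : ℂ) • T (j+1) + (m.choose j : ℂ) • T j := by
      intro j hj
      rw [mem_range, Nat.lt_succ_iff] at hj
      rw [map_smul, ← DwF_eq, key ω hω, smul_add]
      have ea : T (j + 1) = mulF (((Dw ω ^ (j+1)) p).comp (X + C (((m - j : ℕ) : ℂ) * ω)))
          ((DwF ω)^[m - j] U) := by
        have hsub : m + 1 - (j + 1) = m - j := by omega
        simp only [hT]
        rw [hsub]
      have eb : T j = mulF (((Dw ω ^ j) p).comp (X + C ((((m - j : ℕ) : ℂ) * ω + ω))))
          (DwF ω ((DwF ω)^[m - j] U)) := by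
        have hsub : m + 1 - j = (m - j) + 1 := by omega
        have hc : (((m + 1 - j : ℕ) : ℂ)) * ω = ((m - j : ℕ) : ℂ) * ω + ω := by
          rw [hsub]; push_cast; ring
        simp only [hT]
        rw [hc, hsub, Function.iterate_succ_apply']
      rw [ea, eb]
      congr 2
      · rw [pow_succ', Module.End.mul_apply, Dw_shift]
      · rw [shift_shift]
    rw [Function.iterate_succ_apply', ih, DwF_eq, map_sum, Finset.sum_congr rfl hstep]
    show _ = ∑ j ∈ range (m + 2), ((m+1).choose j : ℂ) • T j
    have e1 : ∑ j ∈ range (m + 2), ((m+1).choose j : ℂ) • T j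
        = (∑ j ∈ range (m + 1), ((m+1).choose (j+1) : ℂ) • T (j+1)) + ((m+1).choose 0 : ℂ) • T 0 :=
      Finset.sum_range_succ' _ _
    have e2 : ∑ j ∈ range (m + 2), ((m).choose j : ℂ) • T j
        = (∑ j ∈ range (m + 1), ((m).choose (j+1) : ℂ) • T (j+1)) + ((m).choose 0 : ℂ) • T 0 :=
      Finset.sum_range_succ' _ _
    have e3 : ∑ j ∈ range (m + 2), ((m).choose j : ℂ) • T j
        = ∑ j ∈ range (m + 1), ((m).choose j : ℂ) • T j := by
      rw [Finset.sum_range_succ, Nat.choose_succ_self, Nat.cast_zero, zero_smul, add_zero]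
    have e4 : ∀ j : ℕ, ((m+1).choose (j+1) : ℂ) = (m.choose j : ℂ) + (m.choose (j+1) : ℂ) := by
      intro j; rw [Nat.choose_succ_succ]; push_cast; ring
    have e5 : ∑ j ∈ range (m+1), (m.choose (j+1) : ℂ) • T (j+1)
        = ∑ j ∈ range (m+1), (m.choose j : ℂ) • T j - (m.choose 0 : ℂ) • T 0 := by
      rw [eq_sub_iff_add_eq, ← e2, e3]
    rw [Finset.sum_add_distrib, e1]
    simp only [e4, add_smul, Finset.sum_add_distrib, e5, Nat.choose_zero_right,
      Nat.cast_one, one_smul]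
    abel
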